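/- Let b : ℝ → ℝ be continuous and let c : ℝ × ℝ → ℝ be a continuous function of (x, t). Define B(t) = exp(∫₀ᵗ b(τ) dτ) and V(x, t) = ∫₀ˣ c(ξ, t) dξ, and the Lagrangian L(x, v, t) = B(t)·((1/2)·v² − V(x, t)). Then a twice differentiable curve x : ℝ → ℝ satisfies the Euler–Lagrange equation of L if and only if x''(t) + b(t)·x'(t) + c(x(t), t) = 0 for all t ∈ ℝ. -/

import Mathlib

/-- Partial derivative of the Lagrangian `L x v t` in the velocity argument. -/
noncomputable def pv (L : ℝ → ℝ → ℝ → ℝ) (x v t : ℝ) : ℝ := deriv (fun w => L x w t) v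

/-- Partial derivative of the Lagrangian `L x v t` in the position argument. -/
noncomputable def px (L : ℝ → ℝ → ℝ → ℝ) (x v t : ℝ) : ℝ := deriv (fun y => L y v t) x

/-- A curve `x` satisfies the Euler–Lagrange equation of `L`:
`(d/dt)[(∂L/∂v)(x t, x' t, t)] = (∂L/∂x)(x t, x' t, t)` for all `t`. -/
def SatisfiesEL (L : ℝ → ℝ → ℝ → ℝ) (x : ℝ → ℝ) : Prop :=
  ∀ t : ℝ, deriv (fun s => pv L (x s) (deriv x s) s) t = px L (x t) (deriv x t) t

/-- Partial derivative of `f (x, t)` in the first argument. -/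
noncomputable def pd1 (f : ℝ × ℝ → ℝ) (x t : ℝ) : ℝ := deriv (fun y => f (y, t)) x

/-- Partial derivative of `f (x, t)` in the second argument. -/
noncomputable def pd2 (f : ℝ × ℝ → ℝ) (x t : ℝ) : ℝ := deriv (fun s => f (x, s)) t

theorem standard_lagrangian_time_damping
    (b : ℝ → ℝ) (hb : Continuous b) (c : ℝ × ℝ → ℝ) (hc : Continuous c)
    (B : ℝ → ℝ) (hB : ∀ t : ℝ, B t = Real.exp (∫ τ in (0:ℝ)..t, b τ))
    (V : ℝ → ℝ → ℝ) (hV : ∀ x t : ℝ, V x t = ∫ ξ in (0:ℝ)..x, c (ξ, t))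
    (L : ℝ → ℝ → ℝ → ℝ)
    (hL : ∀ x v t : ℝ, L x v t = B t * ((1/2) * v ^ 2 - V x t))
    (x : ℝ → ℝ) (hx : Differentiable ℝ x) (hx' : Differentiable ℝ (deriv x)) :
    SatisfiesEL L x ↔
      ∀ t : ℝ, deriv (deriv x) t + b t * deriv x t + c (x t, t) = 0 := by
  -- B is differentiable with derivative b t * B t
  have hBderiv : ∀ t : ℝ, HasDerivAt B (b t * B t) t := by
    intro t
    have hInt : HasDerivAt (fun u => ∫ τ in (0:ℝ)..u, b τ) (b t) t :=
      intervalIntegral.integral_hasDerivAt_right (hb.intervalIntegrable 0 t)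
        (hb.stronglyMeasurableAtFilter _ _) hb.continuousAt
    have : HasDerivAt (fun u => Real.exp (∫ τ in (0:ℝ)..u, b τ))
        (Real.exp (∫ τ in (0:ℝ)..t, b τ) * b t) t := hInt.exp
    have hfun : B = fun u => Real.exp (∫ τ in (0:ℝ)..u, b τ) := funext hB
    have h2 : HasDerivAt B (Real.exp (∫ τ in (0:ℝ)..t, b τ) * b t) t := by
      rw [hfun]; exact this
    rw [hB t]
    simpa [mul_comm] using h2
  have hBpos : ∀ t : ℝ, 0 < B t := fun t => (hB t) ▸ Real.exp_pos _
  -- pv L x v t = B t * v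
  have hpv : ∀ X v t : ℝ, pv L X v t = B t * v := by
    intro X v t
    have h1 : HasDerivAt (fun w : ℝ => (1/2) * w ^ 2 - V X t) v v := by
      have := ((hasDerivAt_pow 2 v).const_mul (1/2 : ℝ)).sub_const (V X t)
      simpa using this.congr_deriv (by ring)
    have h2 : HasDerivAt (fun w => L X w t) (B t * v) v := by
      have := h1.const_mul (B t)
      refine this.congr_of_eventuallyEq ?_
      filter_upwards with w
      rw [hL]
    exact h2.deriv
  -- px L x v t = -(B t * c (x, t))
  have hpx : ∀ X v t : ℝ, px L X v t = -(B t * c (X, t)) := by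
    intro X v t
    have hcc : Continuous (fun ξ : ℝ => c (ξ, t)) :=
      hc.comp (continuous_id.prodMk continuous_const)
    have hVd : HasDerivAt (fun y => V y t) (c (X, t)) X := by
      have : HasDerivAt (fun y => ∫ ξ in (0:ℝ)..y, c (ξ, t)) (c (X, t)) X :=
        intervalIntegral.integral_hasDerivAt_right (hcc.intervalIntegrable 0 X)
          (hcc.stronglyMeasurableAtFilter _ _) hcc.continuousAt
      refine this.congr_of_eventuallyEq ?_
      filter_upwards with y
      rw [hV]
    have h2 : HasDerivAt (fun y => L y v t) (-(B t * c (X, t))) X := by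
      have := ((hasDerivAt_const X ((1/2 : ℝ) * v ^ 2)).sub hVd).const_mul (B t)
      have h3 := this.congr_deriv (by ring :
        B t * (0 - c (X, t)) = -(B t * c (X, t)))
      refine h3.congr_of_eventuallyEq ?_
      filter_upwards with y
      rw [hL]
      rfl
    exact h2.deriv
  -- the EL left-hand side function
  have hfunEq : (fun s => pv L (x s) (deriv x s) s) = fun s => B s * deriv x s := by
    funext s; exact hpv _ _ _
  have hLHS : ∀ t : ℝ, deriv (fun s => pv L (x s) (deriv x s) s) t
      = b t * B t * deriv x t + B t * deriv (deriv x) t := by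
    intro t
    rw [hfunEq]
    exact (((hBderiv t).mul (hx' t).hasDerivAt)).deriv
  constructor
  · intro hEL t
    have h := hEL t
    rw [hLHS t, hpx] at h
    have hBne : B t ≠ 0 := (hBpos t).ne'
    have : B t * (deriv (deriv x) t + b t * deriv x t + c (x t, t)) = 0 := by
      linarith [h]
    exact (mul_eq_zero.mp this).resolve_left hBne
  · intro hODE t
    rw [hLHS t, hpx]
    have h := hODE t
    have : B t * (deriv (deriv x) t + b t * deriv x t + c (x t, t)) = 0 := by
      rw [h, mul_zero]
    nlinarith [this]
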